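/- arXiv:1309.4709 — 3 statements merged into one kernel-verified Lean document; each statement's English description precedes it below -/
import Mathlib

section
/- The Douglas–Rachford operator T and its adjoint T* satisfy T*(R_V R_U) = (R_V R_U)T* = T and T(R_U R_V) = (R_U R_V)T = T*. -/
noncomputable section

set_option linter.unusedSectionVars false

variable {X : Type*} [NormedAddCommGroup X] [InnerProductSpace ℝ X] [CompleteSpace X]

/-- The orthogonal projection onto a closed subspace `W`, as an operator on `X`. -/
noncomputable def proj (W : Submodule ℝ X) [Submodule.HasOrthogonalProjection W] : X →L[ℝ] X :=
  W.subtypeL.comp (Submodule.orthogonalProjectionOnto W)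

instance infHOP (U V : Submodule ℝ X) [CompleteSpace U] [CompleteSpace V] :
    Submodule.HasOrthogonalProjection (U ⊓ V) := by
  have hU : IsClosed (U : Set X) := (completeSpace_coe_iff_isComplete.mp ‹_›).isClosed
  have hV : IsClosed (V : Set X) := (completeSpace_coe_iff_isComplete.mp ‹_›).isClosed
  have : CompleteSpace (U ⊓ V : Submodule ℝ X) := (hU.inter hV).completeSpace_coe
  infer_instance

/-- The fixed point set `Fix T = {x | T x = x}` of a continuous linear operator `T`,
as a submodule of `X`. -/
noncomputable def fixedSpace (T : X →L[ℝ] X) : Submodule ℝ X := LinearMap.ker ((T - 1 : X →L[ℝ] X) : X →ₗ[ℝ] X)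

instance fixedSpaceHOP (T : X →L[ℝ] X) : Submodule.HasOrthogonalProjection (fixedSpace T) := by
  have h : IsClosed ((fixedSpace T : Submodule ℝ X) : Set X) := by
    have : ((fixedSpace T : Submodule ℝ X) : Set X) = {x | T x = x} := by
      ext x; simp [fixedSpace, LinearMap.mem_ker, sub_eq_zero]
    rw [this]
    exact isClosed_eq T.continuous continuous_id
  have : CompleteSpace (fixedSpace T) := h.completeSpace_coe
  infer_instance

/-- The reflector `R_W = 2 P_W − Id` associated with `W`. -/
noncomputable def reflector (W : Submodule ℝ X) [Submodule.HasOrthogonalProjection W] : X →L[ℝ] X :=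
  2 • proj W - 1

/-- The Douglas–Rachford operator `T = T_{V,U} = P_V (2 P_U − Id) + Id − P_U`.
(The first argument is `U`, the second is `V`.) -/
noncomputable def drOperator (U V : Submodule ℝ X) [Submodule.HasOrthogonalProjection U]
    [Submodule.HasOrthogonalProjection V] : X →L[ℝ] X :=
  proj V * (2 • proj U - 1) + 1 - proj U

/-- The cosine of the Friedrichs angle between `U` and `V`. -/
noncomputable def friedrichs (U V : Submodule ℝ X) : ℝ :=
  sSup {c : ℝ | ∃ u v : X, u ∈ U ⊓ (U ⊓ V)ᗮ ∧ v ∈ V ⊓ (U ⊓ V)ᗮ ∧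
    ‖u‖ ≤ 1 ∧ ‖v‖ ≤ 1 ∧ c = inner ℝ u v}

lemma proj_sq (W : Submodule ℝ X) [CompleteSpace W] : proj W * proj W = proj W := by
  ext x
  simp [proj, ContinuousLinearMap.mul_apply, Submodule.orthogonalProjectionOnto_mem_subspace_eq_self,
    Submodule.starProjection_eq_self_iff]

lemma proj_adj (W : Submodule ℝ X) [CompleteSpace W] :
    ContinuousLinearMap.adjoint (proj W) = proj W :=
  (isSelfAdjoint_starProjection W).adjoint_eq

lemma reflector_sq (W : Submodule ℝ X) [CompleteSpace W] :
    reflector W * reflector W = 1 := by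
  have h := proj_sq (X := X) W
  unfold reflector
  noncomm_ring
  rw [h]
  abel

lemma reflector_adj (W : Submodule ℝ X) [CompleteSpace W] :
    ContinuousLinearMap.adjoint (reflector W) = reflector W := by
  unfold reflector
  rw [← ContinuousLinearMap.star_eq_adjoint, star_sub, star_one, star_smul,
    ContinuousLinearMap.star_eq_adjoint, proj_adj]
  norm_num

/-- `T*(R_V R_U) = (R_V R_U)T* = T` and `T(R_U R_V) = (R_U R_V)T = T*`. -/
theorem drOperator_adjoint_reflector_identities
    (U V : Submodule ℝ X) [CompleteSpace U] [CompleteSpace V] :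
    ContinuousLinearMap.adjoint (drOperator U V) * (reflector V * reflector U) = drOperator U V ∧
    (reflector V * reflector U) * ContinuousLinearMap.adjoint (drOperator U V) = drOperator U V ∧
    drOperator U V * (reflector U * reflector V) = ContinuousLinearMap.adjoint (drOperator U V) ∧
    (reflector U * reflector V) * drOperator U V = ContinuousLinearMap.adjoint (drOperator U V) := by
  set T := drOperator U V with hTdef
  set S := reflector V * reflector U with hSdef
  set S' := reflector U * reflector V with hS'def
  set Ts := ContinuousLinearMap.adjoint T with hTsdef
  have hT2 : T + T = 1 + S := by
    rw [hTdef, hSdef]; unfold drOperator reflector; noncomm_ring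
  have hSadj : ContinuousLinearMap.adjoint S = S' := by
    rw [hSdef, hS'def]
    rw [← ContinuousLinearMap.star_eq_adjoint, star_mul,
      ContinuousLinearMap.star_eq_adjoint, ContinuousLinearMap.star_eq_adjoint,
      reflector_adj, reflector_adj]
  have hTs2 : Ts + Ts = 1 + S' := by
    have := congrArg (ContinuousLinearMap.adjoint) hT2
    rw [map_add, map_add, hSadj] at this
    rw [hTsdef, this, ← ContinuousLinearMap.star_eq_adjoint, star_one]
  have hSS' : S * S' = 1 := by
    rw [hSdef, hS'def, mul_assoc, ← mul_assoc (reflector U), reflector_sq, one_mul, reflector_sq]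
  have hS'S : S' * S = 1 := by
    rw [hSdef, hS'def, mul_assoc, ← mul_assoc (reflector V), reflector_sq, one_mul, reflector_sq]
  have key : ∀ (A B C D : X →L[ℝ] X), A + A = 1 + B → C + C = 1 + D → B * D = 1 →
      A * D = C := by
    intro A B C D hA hC hBD
    have h2 : (2 : ℝ) • (A * D) = (2 : ℝ) • C := by
      calc (2 : ℝ) • (A * D) = A * D + A * D := by rw [two_smul]
        _ = (A + A) * D := by rw [add_mul]
        _ = (1 + B) * D := by rw [hA]
        _ = D + 1 := by rw [add_mul, one_mul, hBD]
        _ = C + C - (1 + D) + (D + 1) := by rw [hC]; abel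
        _ = (2 : ℝ) • C := by rw [two_smul]; abel
    exact smul_right_injective (X →L[ℝ] X) two_ne_zero h2
  have key2 : ∀ (A B C D : X →L[ℝ] X), A + A = 1 + B → C + C = 1 + D → D * B = 1 →
      D * A = C := by
    intro A B C D hA hC hBD
    have h2 : (2 : ℝ) • (D * A) = (2 : ℝ) • C := by
      calc (2 : ℝ) • (D * A) = D * A + D * A := by rw [two_smul]
        _ = D * (A + A) := by rw [mul_add]
        _ = D * (1 + B) := by rw [hA]
        _ = D + 1 := by rw [mul_add, mul_one, hBD]
        _ = C + C - (1 + D) + (D + 1) := by rw [hC]; abel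
        _ = (2 : ℝ) • C := by rw [two_smul]; abel
    exact smul_right_injective (X →L[ℝ] X) two_ne_zero h2
  refine ⟨key Ts S' T S hTs2 hT2 hS'S, key2 Ts S' T S hTs2 hT2 hSS',
    key T S Ts S' hT2 hTs2 hSS', key2 T S Ts S' hT2 hTs2 hS'S⟩
end
end

section
/- For every natural number n, the Douglas–Rachford operator T satisfies P_U P_{Fix T} = P_V P_{Fix T} = P_{U∩V} P_{Fix T} = P_{U∩V} = P_{U∩V} P_{Fix T} T^n = P_{U∩V} T^n. -/
noncomputable section

variable {X : Type*} [NormedAddCommGroup X] [InnerProductSpace ℝ X] [CompleteSpace X]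

section Aux
open RealInnerProductSpace

variable {X : Type*} [NormedAddCommGroup X] [InnerProductSpace ℝ X] [CompleteSpace X]

omit [CompleteSpace X] in
lemma my_proj_apply (W : Submodule ℝ X) [Submodule.HasOrthogonalProjection W] (x : X) :
    proj W x = (Submodule.orthogonalProjectionOnto W x : X) := rfl

omit [CompleteSpace X] in
lemma my_mem_fixedSpace_iff (T : X →L[ℝ] X) (x : X) : x ∈ fixedSpace T ↔ T x = x := by
  simp [fixedSpace, LinearMap.mem_ker, ContinuousLinearMap.sub_apply,
    ContinuousLinearMap.one_apply, sub_eq_zero]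

omit [CompleteSpace X] in
lemma my_drOperator_apply (U V : Submodule ℝ X) [Submodule.HasOrthogonalProjection U]
    [Submodule.HasOrthogonalProjection V] (x : X) :
    drOperator U V x = proj V (2 • proj U x - x) + x - proj U x := by
  simp [drOperator, ContinuousLinearMap.mul_apply, ContinuousLinearMap.add_apply,
    ContinuousLinearMap.sub_apply, ContinuousLinearMap.smul_apply,
    ContinuousLinearMap.one_apply]

omit [CompleteSpace X] in
lemma my_proj_mem (W : Submodule ℝ X) [Submodule.HasOrthogonalProjection W] (x : X) : proj W x ∈ W :=
  (Submodule.orthogonalProjectionOnto W x).2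

omit [CompleteSpace X] in
lemma my_proj_eq_self (W : Submodule ℝ X) [Submodule.HasOrthogonalProjection W] {x : X} (h : x ∈ W) :
    proj W x = x := Submodule.starProjection_eq_self_iff.mpr h

omit [CompleteSpace X] in
lemma my_sub_proj_mem (W : Submodule ℝ X) [Submodule.HasOrthogonalProjection W] (x : X) :
    x - proj W x ∈ Wᗮ := Submodule.sub_starProjection_mem_orthogonal x

omit [CompleteSpace X] in
lemma my_proj_eq_zero (W : Submodule ℝ X) [Submodule.HasOrthogonalProjection W] {x : X} (h : x ∈ Wᗮ) :
    proj W x = 0 := by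
  rw [my_proj_apply, Submodule.orthogonalProjectionOnto_apply_of_mem_orthogonal h]
  rfl

/-- For `x` in the fixed space of the DR operator, `P_U x = P_V x`. -/
lemma my_fix_projUV (U V : Submodule ℝ X) [CompleteSpace U] [CompleteSpace V] {x : X}
    (hx : x ∈ fixedSpace (drOperator U V)) : proj U x = proj V x := by
  rw [my_mem_fixedSpace_iff, my_drOperator_apply] at hx
  have h1 : proj V (2 • proj U x - x) = proj U x := by
    linear_combination (norm := module) hx
  have hV : proj U x ∈ V := h1 ▸ my_proj_mem V _
  have h2 : proj V (2 • proj U x - x) = 2 • proj V (proj U x) - proj V x := by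
    rw [map_sub, map_nsmul]
  rw [my_proj_eq_self V hV] at h2
  rw [h2, two_nsmul] at h1
  linear_combination (norm := module) h1

lemma my_fix_projInter (U V : Submodule ℝ X) [CompleteSpace U] [CompleteSpace V] {x : X}
    (hx : x ∈ fixedSpace (drOperator U V)) : proj (U ⊓ V) x = proj U x := by
  have hUV : proj U x ∈ U ⊓ V := ⟨my_proj_mem U x, my_fix_projUV U V hx ▸ my_proj_mem V x⟩
  have hperp : x - proj U x ∈ (U ⊓ V)ᗮ :=
    Submodule.orthogonal_le inf_le_left (my_sub_proj_mem U x)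
  exact Submodule.eq_starProjection_of_mem_orthogonal hUV hperp

lemma my_inter_le_fix (U V : Submodule ℝ X) [CompleteSpace U] [CompleteSpace V] :
    U ⊓ V ≤ fixedSpace (drOperator U V) := by
  intro x hx
  rw [my_mem_fixedSpace_iff, my_drOperator_apply, my_proj_eq_self U hx.1]
  have : (2 : ℕ) • x - x = x := by module
  rw [this, my_proj_eq_self V hx.2]
  abel

/-- `P_{U⊓V} (T x) = P_{U⊓V} x`. -/
lemma my_projInter_dr (U V : Submodule ℝ X) [CompleteSpace U] [CompleteSpace V] (x : X) :
    proj (U ⊓ V) (drOperator U V x) = proj (U ⊓ V) x := by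
  have hmem : drOperator U V x - x ∈ (U ⊓ V)ᗮ := by
    rw [Submodule.mem_orthogonal]
    intro w hw
    set u := proj U x with hu
    have hTx : drOperator U V x - x = proj V (u + u - x) - u := by
      rw [my_drOperator_apply, two_nsmul]; abel
    have hinnV : ⟪w, proj V (u + u - x)⟫ = ⟪w, u + u - x⟫ := by
      rw [my_proj_apply, ← Submodule.starProjection_apply, ← Submodule.inner_starProjection_left_eq_right,
        Submodule.starProjection_apply, ← my_proj_apply,
        my_proj_eq_self V hw.2]
    have hinnU : ⟪w, u⟫ = ⟪w, x⟫ := by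
      rw [hu, my_proj_apply, ← Submodule.starProjection_apply, ← Submodule.inner_starProjection_left_eq_right,
        Submodule.starProjection_apply, ← my_proj_apply,
        my_proj_eq_self U hw.1]
    rw [hTx, inner_sub_right, hinnV, inner_sub_right, inner_add_right, hinnU]
    ring
  have h0 := my_proj_eq_zero (U ⊓ V) hmem
  rw [map_sub] at h0
  linear_combination (norm := module) h0

end Aux

/-- for every natural number `n`,
`P_U P_{Fix T} = P_V P_{Fix T} = P_{U∩V} P_{Fix T} = P_{U∩V} = P_{U∩V} P_{Fix T} T^n
= P_{U∩V} T^n`. -/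

theorem proj_inter_drOperator_powers
    (U V : Submodule ℝ X) [CompleteSpace U] [CompleteSpace V] (n : ℕ) :
    proj U * proj (fixedSpace (drOperator U V)) = proj V * proj (fixedSpace (drOperator U V)) ∧
    proj V * proj (fixedSpace (drOperator U V)) =
      proj (U ⊓ V) * proj (fixedSpace (drOperator U V)) ∧
    proj (U ⊓ V) * proj (fixedSpace (drOperator U V)) = proj (U ⊓ V) ∧
    proj (U ⊓ V) = proj (U ⊓ V) * proj (fixedSpace (drOperator U V)) * (drOperator U V) ^ n ∧
    proj (U ⊓ V) * proj (fixedSpace (drOperator U V)) * (drOperator U V) ^ n =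
      proj (U ⊓ V) * (drOperator U V) ^ n := by
  set T := drOperator U V with hT
  set F := fixedSpace T with hF
  have e1 : proj U * proj F = proj V * proj F := by
    ext x
    exact my_fix_projUV U V (my_proj_mem F x)
  have e2 : proj V * proj F = proj (U ⊓ V) * proj F := by
    ext x
    exact ((my_fix_projUV U V (my_proj_mem F x)).symm.trans
      (my_fix_projInter U V (my_proj_mem F x)).symm)
  have e3 : proj (U ⊓ V) * proj F = proj (U ⊓ V) := by
    ext x
    have hperp : proj F x - x ∈ (U ⊓ V)ᗮ := by
      have : x - proj F x ∈ Fᗮ := my_sub_proj_mem F x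
      have h2 : x - proj F x ∈ (U ⊓ V)ᗮ :=
        Submodule.orthogonal_le (my_inter_le_fix U V) this
      simpa using (U ⊓ V)ᗮ.neg_mem h2
    have h0 := my_proj_eq_zero (U ⊓ V) hperp
    rw [map_sub] at h0
    show proj (U ⊓ V) (proj F x) = proj (U ⊓ V) x
    linear_combination (norm := module) h0
  have epow : ∀ m : ℕ, proj (U ⊓ V) * T ^ m = proj (U ⊓ V) := by
    intro m
    induction m with
    | zero => simp
    | succ k ih =>
      ext x
      have : (T ^ (k + 1)) x = (T ^ k) (T x) := by
        rw [pow_succ]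
        rfl
      show proj (U ⊓ V) ((T ^ (k + 1)) x) = proj (U ⊓ V) x
      rw [this]
      calc proj (U ⊓ V) ((T ^ k) (T x)) = proj (U ⊓ V) (T x) := by
            have := congrArg (fun (S : X →L[ℝ] X) => S (T x)) ih
            simpa [ContinuousLinearMap.mul_apply] using this
        _ = proj (U ⊓ V) x := my_projInter_dr U V x
  refine ⟨e1, e2, e3, ?_, ?_⟩
  · rw [e3, epow n]
  · rw [e3, epow n]
end
end

section
/- Let n ≥ 1 be an integer and let x ∈ X. Then the Douglas–Rachford operator T satisfies ‖T^n x − P_{Fix T} x‖ ≤ c_F^n ‖x − P_{Fix T} x‖ ≤ c_F^n ‖x‖, where c_F is the cosine of the Friedrichs angle between U and V. -/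
noncomputable section

variable {X : Type*} [NormedAddCommGroup X] [InnerProductSpace ℝ X] [CompleteSpace X]

open RealInnerProductSpace

/-! ### Basic lemmas about `proj` -/

section ProjBasic

variable {W : Submodule ℝ X} [Submodule.HasOrthogonalProjection W]

lemma proj_mem (x : X) : proj W x ∈ W := (Submodule.orthogonalProjectionOnto W x).2

lemma proj_eq_self {x : X} (h : x ∈ W) : proj W x = x :=
  Submodule.starProjection_eq_self_iff.mpr h

lemma proj_eq_zero {x : X} (h : x ∈ Wᗮ) : proj W x = 0 := by
  show ((Submodule.orthogonalProjectionOnto W x : W) : X) = 0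
  rw [Submodule.orthogonalProjectionOnto_apply_of_mem_orthogonal h]
  rfl

lemma inner_proj_left (x y : X) : ⟪proj W x, y⟫ = ⟪x, proj W y⟫ :=
  Submodule.inner_starProjection_left_eq_right (K := W) x y

lemma sub_proj_mem (x : X) : x - proj W x ∈ Wᗮ :=
  Submodule.sub_starProjection_mem_orthogonal (K := W) x

lemma proj_orthogonal_apply (x : X) : proj Wᗮ x = x - proj W x :=
  Submodule.starProjection_orthogonal_val (K := W) x

lemma proj_pythag (x : X) : ‖x‖ ^ 2 = ‖proj W x‖ ^ 2 + ‖x - proj W x‖ ^ 2 := by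
  have h0 : ⟪proj W x, x - proj W x⟫ = 0 :=
    Submodule.inner_right_of_mem_orthogonal (proj_mem x) (sub_proj_mem x)
  have hx : x = proj W x + (x - proj W x) := by abel
  calc ‖x‖ ^ 2 = ‖proj W x + (x - proj W x)‖ ^ 2 := by rw [← hx]
    _ = ‖proj W x‖ ^ 2 + 2 * ⟪proj W x, x - proj W x⟫ + ‖x - proj W x‖ ^ 2 :=
        norm_add_sq_real _ _
    _ = ‖proj W x‖ ^ 2 + ‖x - proj W x‖ ^ 2 := by rw [h0]; ring

lemma norm_proj_le (x : X) : ‖proj W x‖ ≤ ‖x‖ := by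
  have h := proj_pythag (W := W) x
  have : ‖proj W x‖ ^ 2 ≤ ‖x‖ ^ 2 := by nlinarith [sq_nonneg ‖x - proj W x‖]
  exact le_of_pow_le_pow_left₀ two_ne_zero (norm_nonneg _) this

lemma norm_sub_proj_le (x : X) : ‖x - proj W x‖ ≤ ‖x‖ := by
  have h := proj_pythag (W := W) x
  have : ‖x - proj W x‖ ^ 2 ≤ ‖x‖ ^ 2 := by nlinarith [sq_nonneg ‖proj W x‖]
  exact le_of_pow_le_pow_left₀ two_ne_zero (norm_nonneg _) this

lemma inner_proj_self (x : X) : ⟪x, proj W x⟫ = ‖proj W x‖ ^ 2 := by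
  have h : ⟪proj W x, proj W x⟫ = ⟪x, proj W (proj W x)⟫ := inner_proj_left x (proj W x)
  rw [proj_eq_self (proj_mem x)] at h
  rw [← h, real_inner_self_eq_norm_sq]

end ProjBasic

/-! ### The Friedrichs angle -/

section Friedrichs

variable (U V : Submodule ℝ X) [CompleteSpace U] [CompleteSpace V]

lemma friedrichs_bddAbove : BddAbove {c : ℝ | ∃ u v : X, u ∈ U ⊓ (U ⊓ V)ᗮ ∧
    v ∈ V ⊓ (U ⊓ V)ᗮ ∧ ‖u‖ ≤ 1 ∧ ‖v‖ ≤ 1 ∧ c = inner ℝ u v} := by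
  refine ⟨1, fun c hc => ?_⟩
  obtain ⟨u, v, _, _, hu1, hv1, rfl⟩ := hc
  calc (inner ℝ u v : ℝ) ≤ ‖u‖ * ‖v‖ := real_inner_le_norm u v
    _ ≤ 1 := mul_le_one₀ hu1 (norm_nonneg _) hv1

lemma friedrichs_nonneg : 0 ≤ friedrichs U V := by
  apply le_csSup (friedrichs_bddAbove U V)
  exact ⟨0, 0, zero_mem _, zero_mem _, by simp, by simp, by simp⟩

lemma inner_le_friedrichs {u v : X} (hu : u ∈ U) (hu' : u ∈ (U ⊓ V)ᗮ)
    (hv : v ∈ V) (hv' : v ∈ (U ⊓ V)ᗮ) :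
    ⟪u, v⟫ ≤ friedrichs U V * (‖u‖ * ‖v‖) := by
  rcases eq_or_ne u 0 with rfl | hu0
  · simp
  rcases eq_or_ne v 0 with rfl | hv0
  · simp
  have hun : (0:ℝ) < ‖u‖ := norm_pos_iff.mpr hu0
  have hvn : (0:ℝ) < ‖v‖ := norm_pos_iff.mpr hv0
  have hmem : ⟪(‖u‖⁻¹ • u : X), (‖v‖⁻¹ • v : X)⟫ ≤ friedrichs U V := by
    apply le_csSup (friedrichs_bddAbove U V)
    refine ⟨‖u‖⁻¹ • u, ‖v‖⁻¹ • v, ?_, ?_, ?_, ?_, rfl⟩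
    · exact Submodule.smul_mem _ _ ⟨hu, hu'⟩
    · exact Submodule.smul_mem _ _ ⟨hv, hv'⟩
    · rw [norm_smul, norm_inv, norm_norm, inv_mul_cancel₀ hun.ne']
    · rw [norm_smul, norm_inv, norm_norm, inv_mul_cancel₀ hvn.ne']
  have hinner : ⟪(‖u‖⁻¹ • u : X), (‖v‖⁻¹ • v : X)⟫ = ‖u‖⁻¹ * (‖v‖⁻¹ * ⟪u, v⟫) := by
    rw [real_inner_smul_left, real_inner_smul_right]
  rw [hinner] at hmem
  have := mul_le_mul_of_nonneg_left hmem (le_of_lt (mul_pos hun hvn))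
  calc ⟪u, v⟫ = ‖u‖ * ‖v‖ * (‖u‖⁻¹ * (‖v‖⁻¹ * ⟪u, v⟫)) := by
        field_simp
    _ ≤ ‖u‖ * ‖v‖ * friedrichs U V := this
    _ = friedrichs U V * (‖u‖ * ‖v‖) := by ring

/-- Key bound: if `u ∈ U` and `u ⊥ U ⊓ V`, then `‖P_V u‖ ≤ c_F ‖u‖`. -/
lemma norm_proj_V_le {u : X} (hu : u ∈ U) (hu' : u ∈ (U ⊓ V)ᗮ) :
    ‖proj V u‖ ≤ friedrichs U V * ‖u‖ := by
  set M : Submodule ℝ X := U ⊓ V with hM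
  set w : X := proj V u - proj M (proj V u) with hw
  have hwV : w ∈ V := sub_mem (proj_mem _) ((show M ≤ V from inf_le_right) (proj_mem (proj V u)))
  have hwM : w ∈ Mᗮ := sub_proj_mem _
  have hinner : ⟪u, proj V u⟫ = ⟪u, w⟫ := by
    have h0 : ⟪u, proj M (proj V u)⟫ = 0 :=
      Submodule.inner_left_of_mem_orthogonal (proj_mem _) hu'
    rw [hw, inner_sub_right, h0, sub_zero]
  have hsq : ‖proj V u‖ ^ 2 = ⟪u, w⟫ := by rw [← hinner, inner_proj_self]
  have hwle : ‖w‖ ≤ ‖proj V u‖ := norm_sub_proj_le _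
  have hb : ⟪u, w⟫ ≤ friedrichs U V * (‖u‖ * ‖w‖) := inner_le_friedrichs U V hu hu' hwV hwM
  have hc : (0:ℝ) ≤ friedrichs U V := friedrichs_nonneg U V
  rcases eq_or_lt_of_le (norm_nonneg (proj V u)) with h0 | h0
  · rw [← h0]; positivity
  · have : ‖proj V u‖ ^ 2 ≤ friedrichs U V * ‖u‖ * ‖proj V u‖ := by
      calc ‖proj V u‖ ^ 2 = ⟪u, w⟫ := hsq
        _ ≤ friedrichs U V * (‖u‖ * ‖w‖) := hb
        _ ≤ friedrichs U V * ‖u‖ * ‖proj V u‖ := by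
            rw [← mul_assoc]
            exact mul_le_mul_of_nonneg_left hwle (by positivity)
    nlinarith

/-- The symmetric version: if `v ∈ V` and `v ⊥ U ⊓ V`, then `‖P_U v‖ ≤ c_F ‖v‖`. -/
lemma norm_proj_U_le {v : X} (hv : v ∈ V) (hv' : v ∈ (U ⊓ V)ᗮ) :
    ‖proj U v‖ ≤ friedrichs U V * ‖v‖ := by
  set M : Submodule ℝ X := U ⊓ V with hM
  set w : X := proj U v - proj M (proj U v) with hw
  have hwU : w ∈ U := sub_mem (proj_mem _) ((show M ≤ U from inf_le_left) (proj_mem (proj U v)))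
  have hwM : w ∈ Mᗮ := sub_proj_mem _
  have hinner : ⟪v, proj U v⟫ = ⟪v, w⟫ := by
    have h0 : ⟪v, proj M (proj U v)⟫ = 0 :=
      Submodule.inner_left_of_mem_orthogonal (proj_mem _) hv'
    rw [hw, inner_sub_right, h0, sub_zero]
  have hsq : ‖proj U v‖ ^ 2 = ⟪v, w⟫ := by rw [← hinner, inner_proj_self]
  have hwle : ‖w‖ ≤ ‖proj U v‖ := norm_sub_proj_le _
  have hb : ⟪v, w⟫ ≤ friedrichs U V * (‖w‖ * ‖v‖) := by
    have := inner_le_friedrichs U V hwU hwM hv hv'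
    rw [real_inner_comm] at this
    exact this
  have hc : (0:ℝ) ≤ friedrichs U V := friedrichs_nonneg U V
  rcases eq_or_lt_of_le (norm_nonneg (proj U v)) with h0 | h0
  · rw [← h0]; positivity
  · have : ‖proj U v‖ ^ 2 ≤ friedrichs U V * ‖v‖ * ‖proj U v‖ := by
      calc ‖proj U v‖ ^ 2 = ⟪v, w⟫ := hsq
        _ ≤ friedrichs U V * (‖w‖ * ‖v‖) := hb
        _ ≤ friedrichs U V * ‖v‖ * ‖proj U v‖ := by
            have := mul_le_mul_of_nonneg_left hwle hc
            nlinarith [norm_nonneg v, norm_nonneg w]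
    nlinarith

end Friedrichs

/-! ### Duality: the bound on the orthogonal complements -/

section Duality

variable (U V : Submodule ℝ X) [CompleteSpace U] [CompleteSpace V]

/-- Duality of the Friedrichs angle bound: if `w ∈ Uᗮ` and `w ⊥ Uᗮ ⊓ Vᗮ`, then
`‖P_{Vᗮ} w‖ ≤ c_F ‖w‖`. -/
lemma norm_proj_Vperp_le {w : X} (hw : w ∈ Uᗮ) (hwN : w ∈ (Uᗮ ⊓ Vᗮ)ᗮ) :
    ‖proj Vᗮ w‖ ≤ friedrichs U V * ‖w‖ := by
  classical
  set M : Submodule ℝ X := U ⊓ V with hM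
  set c : ℝ := friedrichs U V with hc
  have hc0 : (0:ℝ) ≤ c := friedrichs_nonneg U V
  set S : Submodule ℝ X := (V ⊓ Mᗮ).map (proj Uᗮ : X →ₗ[ℝ] X) with hS
  -- Step 1: the bound holds on S
  have hbound : ∀ s ∈ S, ‖proj Vᗮ s‖ ≤ c * ‖s‖ := by
    rintro s hs
    obtain ⟨v, hv, rfl⟩ := hs
    obtain ⟨hvV, hvM⟩ := hv
    set s : X := proj Uᗮ v with hsdef
    rcases eq_or_ne v 0 with rfl | hv0
    · simp [hsdef]
    have hvn : (0:ℝ) < ‖v‖ := norm_pos_iff.mpr hv0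
    -- ‖s‖² ≤ ‖proj V s‖ * ‖v‖
    have h1 : ‖s‖ ^ 2 ≤ ‖proj V s‖ * ‖v‖ := by
      have e1 : ⟪v, s⟫ = ‖s‖ ^ 2 := inner_proj_self v
      have e2 : ⟪proj V s, v⟫ = ⟪s, v⟫ := by
        rw [inner_proj_left, proj_eq_self hvV]
      calc ‖s‖ ^ 2 = ⟪proj V s, v⟫ := by rw [e2, real_inner_comm, e1]
        _ ≤ ‖proj V s‖ * ‖v‖ := real_inner_le_norm _ _
    -- (1 - c²)·‖v‖² ≤ ‖s‖²
    have h2 : (1 - c ^ 2) * ‖v‖ ^ 2 ≤ ‖s‖ ^ 2 := by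
      have hPU : ‖proj U v‖ ≤ c * ‖v‖ := norm_proj_U_le U V hvV hvM
      have hpyth : ‖v‖ ^ 2 = ‖proj U v‖ ^ 2 + ‖s‖ ^ 2 := by
        rw [hsdef, proj_orthogonal_apply]; exact proj_pythag v
      nlinarith [norm_nonneg (proj U v), norm_nonneg v]
    -- conclude ‖proj Vᗮ s‖ ≤ c ‖s‖ by squaring
    have hgoal2 : ‖proj Vᗮ s‖ ^ 2 ≤ (c * ‖s‖) ^ 2 := by
      have hpyth : ‖s‖ ^ 2 = ‖proj V s‖ ^ 2 + ‖proj Vᗮ s‖ ^ 2 := by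
        rw [proj_orthogonal_apply]; exact proj_pythag s
      rcases le_or_gt (1 - c ^ 2) 0 with hcase | hcase
      · nlinarith [sq_nonneg ‖proj V s‖, sq_nonneg ‖s‖]
      · -- ‖proj V s‖² ≥ (1 - c²) ‖s‖²
        have h3 : ‖s‖ ^ 4 ≤ ‖proj V s‖ ^ 2 * ‖v‖ ^ 2 := by
          have hnn : (0:ℝ) ≤ ‖s‖ ^ 2 := sq_nonneg _
          nlinarith [norm_nonneg (proj V s), norm_nonneg v, sq_nonneg (‖s‖^2)]
        have h4 : (1 - c ^ 2) * ‖s‖ ^ 2 * ‖v‖ ^ 2 ≤ ‖s‖ ^ 4 := by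
          nlinarith [sq_nonneg ‖s‖]
        have h5 : (1 - c ^ 2) * ‖s‖ ^ 2 ≤ ‖proj V s‖ ^ 2 := by
          have hv2 : (0:ℝ) < ‖v‖ ^ 2 := by positivity
          nlinarith
        nlinarith
    have : (0:ℝ) ≤ c * ‖s‖ := by positivity
    exact le_of_pow_le_pow_left₀ two_ne_zero this hgoal2
  -- Step 2: w lies in the closure of S
  have hwS : w ∈ Sᗮᗮ := by
    rw [Submodule.mem_orthogonal]
    intro x hx
    have hxN : proj Uᗮ x ∈ Uᗮ ⊓ Vᗮ := by
      refine Submodule.mem_inf.mpr ⟨proj_mem x, ?_⟩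
      rw [Submodule.mem_orthogonal]
      intro v hvV
      set v' : X := v - proj M v with hv'
      have hv'mem : v' ∈ V ⊓ Mᗮ :=
        ⟨sub_mem hvV ((show M ≤ V from inf_le_right) (proj_mem v)), sub_proj_mem v⟩
      have hsplit : v = proj M v + v' := by rw [hv']; abel
      have hMv : proj Uᗮ (proj M v) = 0 :=
        proj_eq_zero (U.le_orthogonal_orthogonal ((show M ≤ U from inf_le_left) (proj_mem v)))
      have h1 : ⟪v, proj Uᗮ x⟫ = ⟪proj Uᗮ v, x⟫ := (inner_proj_left v x).symm
      have h2 : proj Uᗮ v = proj Uᗮ v' := by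
        conv_lhs => rw [hsplit]
        rw [map_add, hMv, zero_add]
      have h3 : proj Uᗮ v' ∈ S := ⟨v', hv'mem, rfl⟩
      rw [h1, h2]
      exact Submodule.inner_right_of_mem_orthogonal h3 hx
    have hsplitx : x = proj U x + proj Uᗮ x := by
      rw [proj_orthogonal_apply]; abel
    calc ⟪x, w⟫ = ⟪proj U x, w⟫ + ⟪proj Uᗮ x, w⟫ := by
          conv_lhs => rw [hsplitx]
          rw [inner_add_left]
      _ = 0 := by
          rw [Submodule.inner_right_of_mem_orthogonal (proj_mem x) hw,
            Submodule.inner_right_of_mem_orthogonal hxN hwN, add_zero]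
  rw [Submodule.orthogonal_orthogonal_eq_closure] at hwS
  have hwcl : w ∈ closure (S : Set X) := by
    have h' : w ∈ (S.topologicalClosure : Set X) := hwS
    rwa [Submodule.topologicalClosure_coe] at h'
  -- Step 3: pass to the limit
  have hclosed : IsClosed {x : X | ‖proj Vᗮ x‖ ≤ c * ‖x‖} :=
    isClosed_le ((proj Vᗮ).continuous.norm) (continuous_const.mul continuous_norm)
  have hsub : (S : Set X) ⊆ {x : X | ‖proj Vᗮ x‖ ≤ c * ‖x‖} := fun s hs => hbound s hs
  exact closure_minimal hsub hclosed hwcl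

end Duality

/-! ### The fixed space of the Douglas–Rachford operator -/

section DR

variable (U V : Submodule ℝ X) [CompleteSpace U] [CompleteSpace V]

lemma drOperator_apply (x : X) :
    drOperator U V x = proj V (proj U x) + proj Vᗮ (proj Uᗮ x) := by
  have h1 : proj Uᗮ x = x - proj U x := proj_orthogonal_apply x
  have h2 : proj Vᗮ (proj Uᗮ x) = proj Uᗮ x - proj V (proj Uᗮ x) := proj_orthogonal_apply _
  rw [h2, h1, map_sub]
  simp only [drOperator, ContinuousLinearMap.sub_apply, ContinuousLinearMap.add_apply,
    ContinuousLinearMap.mul_apply, ContinuousLinearMap.smul_apply, ContinuousLinearMap.one_apply,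
    two_smul, map_add, map_sub]
  abel

lemma mem_fixedSpace_iff {T : X →L[ℝ] X} {x : X} : x ∈ fixedSpace T ↔ T x = x := by
  simp [fixedSpace, LinearMap.mem_ker, sub_eq_zero]

lemma inf_le_fixedSpace : U ⊓ V ≤ fixedSpace (drOperator U V) := by
  rintro m ⟨hmU, hmV⟩
  rw [mem_fixedSpace_iff, drOperator_apply]
  rw [proj_eq_self hmU, proj_eq_self hmV,
    proj_eq_zero (U.le_orthogonal_orthogonal hmU), map_zero, add_zero]

lemma inf_orth_le_fixedSpace : Uᗮ ⊓ Vᗮ ≤ fixedSpace (drOperator U V) := by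
  rintro n ⟨hnU, hnV⟩
  rw [mem_fixedSpace_iff, drOperator_apply]
  rw [proj_eq_zero hnU, map_zero, proj_eq_self hnU, proj_eq_self hnV, zero_add]

/-- Every fixed point of the DR operator decomposes as `m + n` with `m ∈ U ⊓ V` and
`n ∈ Uᗮ ⊓ Vᗮ`. -/
lemma fixedSpace_decomp {f : X} (hf : f ∈ fixedSpace (drOperator U V)) :
    proj U f = proj V f ∧ proj Uᗮ f = proj Vᗮ f := by
  rw [mem_fixedSpace_iff, drOperator_apply] at hf
  have hinner : ⟪f, proj V (proj U f)⟫ + ⟪f, proj Vᗮ (proj Uᗮ f)⟫ = ‖f‖ ^ 2 := by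
    rw [← inner_add_right, hf, real_inner_self_eq_norm_sq]
  have e1 : ⟪f, proj V (proj U f)⟫ = ⟪proj V f, proj U f⟫ :=
    (inner_proj_left f (proj U f)).symm
  have e2 : ⟪f, proj Vᗮ (proj Uᗮ f)⟫ = ⟪proj Vᗮ f, proj Uᗮ f⟫ :=
    (inner_proj_left f (proj Uᗮ f)).symm
  have pU : ‖f‖ ^ 2 = ‖proj U f‖ ^ 2 + ‖proj Uᗮ f‖ ^ 2 := by
    rw [proj_orthogonal_apply]; exact proj_pythag f
  have pV : ‖f‖ ^ 2 = ‖proj V f‖ ^ 2 + ‖proj Vᗮ f‖ ^ 2 := by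
    rw [proj_orthogonal_apply]; exact proj_pythag f
  have key : ‖proj U f - proj V f‖ ^ 2 + ‖proj Uᗮ f - proj Vᗮ f‖ ^ 2 = 0 := by
    have n1 : ‖proj U f - proj V f‖ ^ 2 =
        ‖proj U f‖ ^ 2 - 2 * ⟪proj U f, proj V f⟫ + ‖proj V f‖ ^ 2 := norm_sub_sq_real _ _
    have n2 : ‖proj Uᗮ f - proj Vᗮ f‖ ^ 2 =
        ‖proj Uᗮ f‖ ^ 2 - 2 * ⟪proj Uᗮ f, proj Vᗮ f⟫ + ‖proj Vᗮ f‖ ^ 2 := norm_sub_sq_real _ _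
    have c1 : ⟪proj U f, proj V f⟫ = ⟪proj V f, proj U f⟫ := real_inner_comm _ _
    have c2 : ⟪proj Uᗮ f, proj Vᗮ f⟫ = ⟪proj Vᗮ f, proj Uᗮ f⟫ := real_inner_comm _ _
    rw [e1, e2] at hinner
    nlinarith
  constructor
  · have : ‖proj U f - proj V f‖ ^ 2 = 0 := by nlinarith [sq_nonneg ‖proj Uᗮ f - proj Vᗮ f‖]
    have := pow_eq_zero_iff (n := 2) two_ne_zero |>.mp this
    rwa [norm_eq_zero, sub_eq_zero] at this
  · have : ‖proj Uᗮ f - proj Vᗮ f‖ ^ 2 = 0 := by nlinarith [sq_nonneg ‖proj U f - proj V f‖]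
    have := pow_eq_zero_iff (n := 2) two_ne_zero |>.mp this
    rwa [norm_eq_zero, sub_eq_zero] at this

/-- The "adjoint" fixes fixed points: for `f` in the fixed space,
`P_U P_V f + P_{Uᗮ} P_{Vᗮ} f = f`. -/
lemma adjoint_fixed {f : X} (hf : f ∈ fixedSpace (drOperator U V)) :
    proj U (proj V f) + proj Uᗮ (proj Vᗮ f) = f := by
  obtain ⟨h1, h2⟩ := fixedSpace_decomp U V hf
  have hm : proj V f ∈ U ⊓ V := by
    refine ⟨?_, proj_mem f⟩
    rw [← h1]; exact proj_mem f
  have hn : proj Vᗮ f ∈ Uᗮ ⊓ Vᗮ := by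
    refine ⟨?_, proj_mem f⟩
    rw [← h2]; exact proj_mem f
  rw [proj_eq_self hm.1, proj_eq_self hn.1, ← h1, ← h2, proj_orthogonal_apply]
  abel

lemma drOperator_mem_orthogonal_fixedSpace {z : X}
    (hz : z ∈ (fixedSpace (drOperator U V))ᗮ) :
    drOperator U V z ∈ (fixedSpace (drOperator U V))ᗮ := by
  rw [Submodule.mem_orthogonal]
  intro f hf
  rw [drOperator_apply, inner_add_right]
  have e1 : ⟪f, proj V (proj U z)⟫ = ⟪proj U (proj V f), z⟫ := by
    rw [← inner_proj_left (W := V) f (proj U z), inner_proj_left (W := U) (proj V f) z]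
  have e2 : ⟪f, proj Vᗮ (proj Uᗮ z)⟫ = ⟪proj Uᗮ (proj Vᗮ f), z⟫ := by
    rw [← inner_proj_left (W := Vᗮ) f (proj Uᗮ z), inner_proj_left (W := Uᗮ) (proj Vᗮ f) z]
  rw [e1, e2, ← inner_add_left, adjoint_fixed U V hf]
  exact Submodule.inner_right_of_mem_orthogonal hf hz

/-- One-step contraction on the orthogonal complement of the fixed space. -/
lemma drOperator_contraction {z : X} (hz : z ∈ (fixedSpace (drOperator U V))ᗮ) :
    ‖drOperator U V z‖ ≤ friedrichs U V * ‖z‖ := by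
  set c : ℝ := friedrichs U V with hc
  have hc0 : (0:ℝ) ≤ c := friedrichs_nonneg U V
  have hzM : z ∈ (U ⊓ V)ᗮ := Submodule.orthogonal_le (inf_le_fixedSpace U V) hz
  have hzN : z ∈ (Uᗮ ⊓ Vᗮ)ᗮ := Submodule.orthogonal_le (inf_orth_le_fixedSpace U V) hz
  have haM : proj U z ∈ (U ⊓ V)ᗮ := by
    rw [Submodule.mem_orthogonal]
    intro m hm
    have : ⟪proj U z, m⟫ = ⟪z, m⟫ := by
      rw [inner_proj_left (W := U) z m, proj_eq_self hm.1]
    rw [real_inner_comm, this]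
    exact Submodule.inner_left_of_mem_orthogonal hm hzM
  have hbN : proj Uᗮ z ∈ (Uᗮ ⊓ Vᗮ)ᗮ := by
    rw [Submodule.mem_orthogonal]
    intro n hn
    have : ⟪proj Uᗮ z, n⟫ = ⟪z, n⟫ := by
      rw [inner_proj_left (W := Uᗮ) z n, proj_eq_self hn.1]
    rw [real_inner_comm, this]
    exact Submodule.inner_left_of_mem_orthogonal hn hzN
  have h1 : ‖proj V (proj U z)‖ ≤ c * ‖proj U z‖ := norm_proj_V_le U V (proj_mem z) haM
  have h2 : ‖proj Vᗮ (proj Uᗮ z)‖ ≤ c * ‖proj Uᗮ z‖ :=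
    norm_proj_Vperp_le U V (proj_mem z) hbN
  have hsq : ‖drOperator U V z‖ ^ 2 =
      ‖proj V (proj U z)‖ ^ 2 + ‖proj Vᗮ (proj Uᗮ z)‖ ^ 2 := by
    rw [drOperator_apply]
    have h0 : ⟪proj V (proj U z), proj Vᗮ (proj Uᗮ z)⟫ = 0 :=
      Submodule.inner_right_of_mem_orthogonal (proj_mem _) (proj_mem (W := Vᗮ) _)
    rw [norm_add_sq_real, h0]; ring
  have hzsq : ‖z‖ ^ 2 = ‖proj U z‖ ^ 2 + ‖proj Uᗮ z‖ ^ 2 := by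
    rw [proj_orthogonal_apply]; exact proj_pythag z
  have hfin : ‖drOperator U V z‖ ^ 2 ≤ (c * ‖z‖) ^ 2 := by
    have s1 : ‖proj V (proj U z)‖ ^ 2 ≤ (c * ‖proj U z‖) ^ 2 :=
      pow_le_pow_left₀ (norm_nonneg _) h1 2
    have s2 : ‖proj Vᗮ (proj Uᗮ z)‖ ^ 2 ≤ (c * ‖proj Uᗮ z‖) ^ 2 :=
      pow_le_pow_left₀ (norm_nonneg _) h2 2
    calc ‖drOperator U V z‖ ^ 2
        = ‖proj V (proj U z)‖ ^ 2 + ‖proj Vᗮ (proj Uᗮ z)‖ ^ 2 := hsq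
      _ ≤ (c * ‖proj U z‖) ^ 2 + (c * ‖proj Uᗮ z‖) ^ 2 := add_le_add s1 s2
      _ = c ^ 2 * (‖proj U z‖ ^ 2 + ‖proj Uᗮ z‖ ^ 2) := by ring
      _ = (c * ‖z‖) ^ 2 := by rw [← hzsq]; ring
  exact le_of_pow_le_pow_left₀ two_ne_zero (by positivity) hfin

lemma drOperator_pow_contraction (n : ℕ) :
    ∀ z ∈ (fixedSpace (drOperator U V))ᗮ,
    ‖((drOperator U V) ^ n) z‖ ≤ friedrichs U V ^ n * ‖z‖ ∧
      ((drOperator U V) ^ n) z ∈ (fixedSpace (drOperator U V))ᗮ := by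
  induction n with
  | zero => intro z hz; simpa using hz
  | succ k ih =>
    intro z hz
    have hTz : drOperator U V z ∈ (fixedSpace (drOperator U V))ᗮ :=
      drOperator_mem_orthogonal_fixedSpace U V hz
    have hstep : ‖drOperator U V z‖ ≤ friedrichs U V * ‖z‖ :=
      drOperator_contraction U V hz
    have hpow : ((drOperator U V) ^ (k + 1)) z = ((drOperator U V) ^ k) (drOperator U V z) := by
      rw [pow_succ]; rfl
    obtain ⟨ih1, ih2⟩ := ih (drOperator U V z) hTz
    constructor
    · rw [hpow]
      calc ‖((drOperator U V) ^ k) (drOperator U V z)‖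
          ≤ friedrichs U V ^ k * ‖drOperator U V z‖ := ih1
        _ ≤ friedrichs U V ^ k * (friedrichs U V * ‖z‖) :=
            mul_le_mul_of_nonneg_left hstep (pow_nonneg (friedrichs_nonneg U V) k)
        _ = friedrichs U V ^ (k + 1) * ‖z‖ := by rw [pow_succ]; ring
    · rw [hpow]; exact ih2

end DR

/-- `‖T^n x − P_{Fix T} x‖ ≤ c_F^n ‖x − P_{Fix T} x‖ ≤ c_F^n ‖x‖`
for every integer `n ≥ 1` and every `x ∈ X`. -/
theorem norm_drOperator_pow_apply_sub_le
    (U V : Submodule ℝ X) [CompleteSpace U] [CompleteSpace V] (n : ℕ) (hn : 1 ≤ n) (x : X) :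
    ‖((drOperator U V) ^ n) x - proj (fixedSpace (drOperator U V)) x‖ ≤
      friedrichs U V ^ n * ‖x - proj (fixedSpace (drOperator U V)) x‖ ∧
    friedrichs U V ^ n * ‖x - proj (fixedSpace (drOperator U V)) x‖ ≤
      friedrichs U V ^ n * ‖x‖ := by
  set T : X →L[ℝ] X := drOperator U V with hT
  set F : Submodule ℝ X := fixedSpace T with hF
  set p : X := proj F x with hp
  have hpF : p ∈ F := proj_mem x
  have hfix : ∀ k : ℕ, (T ^ k) p = p := by
    intro k
    induction k with
    | zero => simp
    | succ m ih =>
      rw [pow_succ]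
      show (T ^ m) (T p) = p
      rw [mem_fixedSpace_iff.mp hpF, ih]
  have hdiff : (T ^ n) x - p = (T ^ n) (x - p) := by
    rw [map_sub, hfix n]
  have hzF : x - p ∈ Fᗮ := sub_proj_mem x
  obtain ⟨hbound, _⟩ := drOperator_pow_contraction U V n (x - p) hzF
  constructor
  · rw [hdiff]; exact hbound
  · exact mul_le_mul_of_nonneg_left (norm_sub_proj_le x)
      (pow_nonneg (friedrichs_nonneg U V) n)
end
end
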